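/- arXiv:1012.1785 — 9 statements merged into one kernel-verified Lean document; each statement's English description precedes it below -/
import Mathlib

section
/- Let Γ be a finitely generated residually finite group with no non-trivial finite normal subgroup. If φ : Γ → Γ is an endomorphism with image of finite index, then φ is injective. -/
open Subgroup

/-- A finitely generated group has only finitely many homomorphisms to a fixed
finite group. -/
lemma hirshon_finite_monoidHom {G Q : Type*} [Group G] [Group Q] [Group.FG G] [Finite Q] :
    Finite (G →* Q) := by
  obtain ⟨S, hS, hSfin⟩ := (Subgroup.fg_iff (⊤ : Subgroup G)).mp Group.FG.out
  haveI := hSfin.to_subtype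
  have hinj : Function.Injective (fun f : G →* Q => (fun s : S => f s)) := by
    intro f g h
    refine MonoidHom.eq_of_eqOn_dense hS ?_
    intro x hx
    exact congrFun h ⟨x, hx⟩
  exact Finite.of_injective _ hinj

/-- A group is *residually finite* if every non-trivial element survives in
some finite quotient, i.e. lies outside some normal subgroup of finite index. -/
def ResiduallyFinite (Γ : Type*) [Group Γ] : Prop :=
  ∀ g : Γ, g ≠ 1 → ∃ N : Subgroup Γ, N.Normal ∧ N.FiniteIndex ∧ g ∉ N

/-- Hirshon's lemma: if `Γ` is a finitely generated residually finite group
with no non-trivial finite normal subgroup, then any endomorphism of `Γ`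
whose image has finite index is injective. -/
theorem hirshon (Γ : Type*) [Group Γ] [Group.FG Γ]
    (hrf : ResiduallyFinite Γ)
    (hnofin : ∀ N : Subgroup Γ, N.Normal → Finite N → N = ⊥)
    (φ : Γ →* Γ) (hfi : φ.range.FiniteIndex) :
    Function.Injective φ := by
  classical
  set φE : Monoid.End Γ := φ with hφE
  have hd0 : φ.range.index ≠ 0 := hfi.index_ne_zero
  -- Key bound: for any φ-invariant finite-index normal subgroup `W`,
  -- the index of `W ∩ ker φ` in `ker φ` is at most `[Γ : range φ]`.
  have key : ∀ W : Subgroup Γ, W.Normal → W.FiniteIndex → W ≤ W.comap φ →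
      W.relIndex φ.ker ≤ φ.range.index := by
    intro W hWn hWfi hWle
    haveI := hWn
    haveI := hWfi
    set π : Γ →* Γ ⧸ W := QuotientGroup.mk' W with hπ
    set ψ : Γ ⧸ W →* Γ ⧸ W := QuotientGroup.map W W φ hWle with hψ
    set ρ : φ.ker →* Γ ⧸ W := π.comp φ.ker.subtype with hρ
    have hρker : ρ.ker = W.subgroupOf φ.ker := by
      rw [hρ, ← MonoidHom.comap_ker, QuotientGroup.ker_mk']
      rfl
    have h1 : W.relIndex φ.ker = Nat.card ρ.range := by
      rw [Subgroup.relIndex, ← hρker, Subgroup.index_ker]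
    have h2 : ρ.range ≤ ψ.ker := by
      rintro x ⟨⟨k, hk⟩, rfl⟩
      have hk1 : φ k = 1 := hk
      rw [MonoidHom.mem_ker]
      show (QuotientGroup.map W W φ hWle) (QuotientGroup.mk' W k) = 1
      rw [QuotientGroup.map_mk', hk1]
      simp
    have h3 : Nat.card ρ.range ≤ Nat.card ψ.ker := Subgroup.card_le_of_le h2
    -- `Nat.card ψ.ker = ψ.range.index` in the finite group `Γ ⧸ W`
    have hcr : Nat.card ψ.range ≠ 0 := Nat.card_pos.ne'
    have h4 : Nat.card ψ.ker = ψ.range.index := by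
      have a1 : Nat.card ψ.ker * Nat.card ψ.range = Nat.card (Γ ⧸ W) := by
        rw [← Subgroup.index_ker ψ]
        exact Subgroup.card_mul_index ψ.ker
      have a2 : ψ.range.index * Nat.card ψ.range = Nat.card (Γ ⧸ W) :=
        Subgroup.index_mul_card ψ.range
      exact Nat.eq_of_mul_eq_mul_right (Nat.pos_of_ne_zero hcr) (a1.trans a2.symm)
    have h5 : ψ.range.index ≤ φ.range.index := by
      have hle : φ.range.map π ≤ ψ.range := by
        rintro x ⟨y, ⟨z, rfl⟩, rfl⟩
        exact ⟨π z, (QuotientGroup.map_mk' W W φ hWle z).symm⟩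
      have d1 : ψ.range.index ∣ (φ.range.map π).index := Subgroup.index_dvd_of_le hle
      have d2 : (φ.range.map π).index = (φ.range ⊔ W).index := by
        rw [Subgroup.index_map, hπ, QuotientGroup.ker_mk',
          MonoidHom.range_eq_top_of_surjective _ (QuotientGroup.mk'_surjective W),
          Subgroup.index_top, mul_one]
      have d3 : (φ.range ⊔ W).index ∣ φ.range.index :=
        Subgroup.index_dvd_of_le le_sup_left
      have : ψ.range.index ∣ φ.range.index := by
        rw [d2] at d1; exact d1.trans d3
      exact Nat.le_of_dvd (Nat.pos_of_ne_zero hd0) this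
    calc W.relIndex φ.ker = Nat.card ρ.range := h1
      _ ≤ Nat.card ψ.ker := h3
      _ = ψ.range.index := h4
      _ ≤ φ.range.index := h5
  -- The family of φ-invariant finite-index normal subgroups
  set P : Subgroup Γ → Prop := fun W => W.Normal ∧ W.FiniteIndex ∧ W ≤ W.comap φ with hP
  have hPtop : P ⊤ := ⟨inferInstance, inferInstance, le_top⟩
  -- For every non-trivial g there is a member of the family avoiding g
  have avoid : ∀ g : Γ, g ≠ 1 → ∃ W : Subgroup Γ, P W ∧ g ∉ W := by
    intro g hg
    obtain ⟨N, hNn, hNfi, hgN⟩ := hrf g hg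
    haveI := hNn
    haveI := hNfi
    set F : ℕ → (Γ →* Γ ⧸ N) := fun j =>
      (QuotientGroup.mk' N).comp (φE ^ j) with hF
    have hFker : ∀ j, (F j).ker = N.comap (φE ^ j) := by
      intro j
      rw [hF]; ext x; rw [MonoidHom.mem_ker]
      exact QuotientGroup.eq_one_iff _
    set W : Subgroup Γ := ⨅ j : ℕ, N.comap (φE ^ j) with hW
    have hmemW : ∀ x : Γ, x ∈ W ↔ ∀ j : ℕ, (φE ^ j) x ∈ N := by
      intro x
      simp only [hW, Subgroup.mem_iInf, Subgroup.mem_comap]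
      exact Iff.rfl
    refine ⟨W, ⟨?_, ?_, ?_⟩, ?_⟩
    · -- normal
      constructor
      intro x hx γ
      rw [hmemW] at hx ⊢
      intro j
      rw [map_mul, map_mul, map_inv]
      exact hNn.conj_mem _ (hx j) _
    · -- finite index
      haveI : Finite (Γ →* Γ ⧸ N) := hirshon_finite_monoidHom
      have hrange : (Set.range fun j : ℕ =>
          N.comap (φE ^ j)).Finite := by
        have : (Set.range fun j : ℕ => N.comap (φE ^ j)) =
            MonoidHom.ker '' (Set.range F) := by
          rw [← Set.range_comp]
          refine congrArg Set.range ?_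
          funext j
          exact (hFker j).symm
        rw [this]
        exact (Set.toFinite (Set.range F)).image _
      have hWsinf : W = sInf (Set.range fun j : ℕ =>
          N.comap (φE ^ j)) := by
        rw [sInf_range]
      rw [hWsinf, sInf_eq_iInf']
      haveI := hrange.to_subtype
      refine Subgroup.finiteIndex_iInf ?_
      rintro ⟨H, j, rfl⟩
      show (N.comap (φE ^ j)).FiniteIndex
      exact hFker j ▸ Subgroup.finiteIndex_ker (F j)
    · -- φ-invariance
      intro x hx
      rw [Subgroup.mem_comap]
      refine (hmemW (φ x)).mpr ?_
      intro j
      have h := (hmemW x).mp hx (j + 1)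
      rw [pow_succ] at h
      exact h
    · -- g ∉ W
      intro hgW
      apply hgN
      have h0 := (hmemW g).mp hgW 0
      rw [pow_zero] at h0
      simpa [Monoid.End.coe_one] using h0
  -- Choose a member of the family with maximal relative index in ker φ
  set S : Set ℕ := {n | ∃ W : Subgroup Γ, P W ∧ W.relIndex φ.ker = n} with hS
  have hSne : S.Nonempty := ⟨(⊤ : Subgroup Γ).relIndex φ.ker, ⊤, hPtop, rfl⟩
  have hSbdd : BddAbove S := by
    refine ⟨φ.range.index, ?_⟩
    rintro n ⟨W, ⟨h1, h2, h3⟩, rfl⟩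
    exact key W h1 h2 h3
  obtain ⟨W₀, hPW₀, hcW₀⟩ := Nat.sSup_mem hSne hSbdd
  obtain ⟨hW₀n, hW₀fi, hW₀le⟩ := hPW₀
  haveI := hW₀n
  haveI := hW₀fi
  -- ker φ ∩ W₀ is trivial
  have hKW : W₀.subgroupOf φ.ker = ⊥ := by
    rw [eq_bot_iff]
    rintro ⟨x, hxK⟩ hxW₀
    rw [Subgroup.mem_subgroupOf] at hxW₀
    simp only [Subgroup.mem_bot]
    ext
    show x = 1
    by_contra hx1
    obtain ⟨W, ⟨hWn, hWfi, hWle⟩, hxW⟩ := avoid x hx1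
    haveI := hWn
    haveI := hWfi
    set W' : Subgroup Γ := W₀ ⊓ W with hW'
    have hPW' : P W' := by
      refine ⟨?_, inferInstance, ?_⟩
      · constructor
        intro a ha γ
        exact ⟨hW₀n.conj_mem _ ha.1 γ, hWn.conj_mem _ ha.2 γ⟩
      · intro a ha
        exact ⟨hW₀le ha.1, hWle ha.2⟩
    -- the relative index of W' equals that of W₀
    have hc1 : W'.relIndex φ.ker ≤ sSup S := le_csSup hSbdd ⟨W', hPW', rfl⟩
    have hc2 : W₀.relIndex φ.ker ∣ W'.relIndex φ.ker :=
      Subgroup.relIndex_dvd_of_le_left φ.ker inf_le_left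
    haveI : (W'.subgroupOf φ.ker).FiniteIndex := by
      have : W'.FiniteIndex := hPW'.2.1
      infer_instance
    have hc3 : W'.relIndex φ.ker ≠ 0 := this.index_ne_zero
    have hc4 : W₀.relIndex φ.ker ≤ W'.relIndex φ.ker :=
      Nat.le_of_dvd (Nat.pos_of_ne_zero hc3) hc2
    have hceq : W'.relIndex φ.ker = W₀.relIndex φ.ker :=
      le_antisymm (hcW₀ ▸ hc1) (hcW₀ ▸ hcW₀ ▸ hc4)
    -- hence the two subgroups of ker φ coincide
    have hsub : W'.subgroupOf φ.ker = W₀.subgroupOf φ.ker := by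
      by_contra hne
      have hlt : W'.subgroupOf φ.ker < W₀.subgroupOf φ.ker :=
        lt_of_le_of_ne (fun a ha => by
          rw [Subgroup.mem_subgroupOf] at ha ⊢
          exact ha.1) hne
      have := Subgroup.index_strictAnti hlt
      rw [← Subgroup.relIndex, ← Subgroup.relIndex] at this
      omega
    have : (⟨x, hxK⟩ : φ.ker) ∈ W'.subgroupOf φ.ker := by
      rw [hsub, Subgroup.mem_subgroupOf]
      exact hxW₀
    rw [Subgroup.mem_subgroupOf] at this
    exact hxW (this.2)
  -- therefore ker φ is finite
  have hfin : Finite φ.ker := by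
    have hinj : Function.Injective ((QuotientGroup.mk' W₀).comp φ.ker.subtype) := by
      rw [← MonoidHom.ker_eq_bot_iff, ← MonoidHom.comap_ker, QuotientGroup.ker_mk']
      exact hKW
    exact Finite.of_injective _ hinj
  have : φ.ker = ⊥ := hnofin φ.ker (MonoidHom.normal_ker φ) hfin
  exact (MonoidHom.ker_eq_bot_iff φ).mp this
end

section
/- Let Γ be a torsion-free group and φ : Γ → Γ a non-injective endomorphism such that φ^i(Γ) has finite index in Γ for all i ≥ 0. Then the kernels ker(φ) ⊆ ker(φ²) ⊆ ker(φ³) ⊆ ... are all distinct, i.e., the inclusions are strict. -/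
/-- A monoid is torsion-free if no element except `1` has finite order
(the definition of `Monoid.IsTorsionFree` in Mathlib of December 2024). -/
def Monoid.IsTorsionFree (G : Type*) [Monoid G] : Prop :=
  ∀ g : G, g ≠ 1 → ¬IsOfFinOrder g

/-- Let `Γ` be a torsion-free group and `φ` a non-injective endomorphism such
that the image of every iterate `φ^i` has finite index in `Γ`.  Then the
kernels of the iterates form a strictly increasing chain:
`ker φ ⊊ ker φ² ⊊ ker φ³ ⊊ …`. -/
theorem kernels_strictly_increasing (Γ : Type*) [Group Γ]
    (htf : Monoid.IsTorsionFree Γ) (φ : Monoid.End Γ)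
    (hni : ¬ Function.Injective φ)
    (hfi : ∀ i : ℕ, (φ ^ i : Monoid.End Γ).range.FiniteIndex) :
    ∀ i : ℕ, ((φ ^ i : Monoid.End Γ)).ker < ((φ ^ (i + 1) : Monoid.End Γ)).ker := by
  -- get a nontrivial element of the kernel of φ
  obtain ⟨x, hx, hx1⟩ : ∃ x : Γ, φ x = 1 ∧ x ≠ 1 := by
    by_contra h
    push_neg at h
    exact hni ((injective_iff_map_eq_one φ).2 h)
  intro i
  have hle : ((φ ^ i : Monoid.End Γ)).ker ≤ ((φ ^ (i + 1) : Monoid.End Γ)).ker := by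
    intro z hz
    have hz' : (φ ^ i : Monoid.End Γ) z = 1 := hz
    show (φ ^ (i + 1) : Monoid.End Γ) z = 1
    rw [pow_succ']
    simpa using congrArg φ hz'
  -- find a power of x in the range of φ^i
  obtain ⟨n, hn0, -, hxn⟩ :=
    Subgroup.exists_pow_mem_of_index_ne_zero ((hfi i).index_ne_zero) x
  obtain ⟨y, hy⟩ := hxn
  refine lt_of_le_of_ne hle (fun heq => ?_)
  have hy1 : (φ ^ (i + 1) : Monoid.End Γ) y = 1 := by
    rw [pow_succ']
    show φ ((φ ^ i : Monoid.End Γ) y) = 1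
    exact (congrArg φ hy).trans (by rw [map_pow, hx, one_pow])
  have hy0 : (φ ^ i : Monoid.End Γ) y = 1 := by
    have : y ∈ ((φ ^ i : Monoid.End Γ)).ker := heq ▸ hy1
    exact this
  have : x ^ n = 1 := by rw [← hy]; exact hy0
  exact htf x hx1 (isOfFinOrder_iff_pow_eq_one.2 ⟨n, hn0, this⟩)
end

section
/- Let Γ be a finitely generated group, φ : Γ → Γ an injective endomorphism, and H ≤ Γ a torsion-free subgroup of finite index. Then there exist integers m, n > 0 such that φ^m maps φ^{-n}(H) into φ^{-n}(H). -/
/-- Conjugation of permutations by an equivalence, as a monoid hom. -/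
private def permConjHom {α β : Type*} (e : α ≃ β) :
    Equiv.Perm α →* Equiv.Perm β where
  toFun p := (e.symm.trans p).trans e
  map_one' := by ext x; simp
  map_mul' p q := by ext x; simp

/-- Homs from a finitely generated group into a finite monoid form a finite type. -/
private lemma finite_monoidHom (G M : Type*) [Group G] [Group.FG G] [Monoid M]
    [Finite M] : Finite (G →* M) := by
  obtain ⟨S, hS, hSfin⟩ := Group.fg_iff.mp ‹Group.FG G›
  have : Finite S := hSfin
  refine Finite.of_injective (fun f : G →* M => fun s : S => f s) ?_
  intro f g h
  refine MonoidHom.eq_of_eqOn_dense hS ?_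
  intro x hx
  exact congrFun h ⟨x, hx⟩

/-- A finitely generated group has finitely many subgroups of any given index. -/
private lemma finite_subgroups_of_index (G : Type*) [Group G] [Group.FG G] (n : ℕ)
    (hn : 0 < n) : Set.Finite {K : Subgroup G | K.index = n} := by
  have hfs : Finite ((G →* Equiv.Perm (Fin n)) × Fin n) := by
    have := finite_monoidHom G (Equiv.Perm (Fin n))
    infer_instance
  rw [Set.finite_coe_iff.symm]
  have key : ∀ K : {K : Subgroup G | K.index = n},
      ∃ p : (G →* Equiv.Perm (Fin n)) × Fin n,
        ∀ g : G, g ∈ K.1 ↔ p.1 g p.2 = p.2 := by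
    rintro ⟨K, hK⟩
    have hKne : K.index ≠ 0 := hK ▸ hn.ne'
    haveI : Fintype (G ⧸ K) := K.fintypeOfIndexNeZero hKne
    have hcard : Fintype.card (G ⧸ K) = n := by
      rw [← Nat.card_eq_fintype_card, ← Subgroup.index, hK]
    let e : (G ⧸ K) ≃ Fin n := Fintype.equivFinOfCardEq hcard
    refine ⟨⟨(permConjHom e).comp (MulAction.toPermHom G (G ⧸ K)),
      e ((1 : G) : G ⧸ K)⟩, ?_⟩
    intro g
    simp only [MonoidHom.comp_apply, permConjHom, MonoidHom.coe_mk, OneHom.coe_mk,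
      Equiv.trans_apply, Equiv.symm_apply_apply, MulAction.toPermHom_apply]
    rw [Equiv.apply_eq_iff_eq]
    have := MulAction.stabilizer_quotient K
    constructor
    · intro hg
      have : g ∈ MulAction.stabilizer G ((1 : G) : G ⧸ K) := this.symm ▸ hg
      exact this
    · intro hg
      have hst : g ∈ MulAction.stabilizer G ((1 : G) : G ⧸ K) := hg
      exact this ▸ hst
  choose F hF using key
  refine Finite.of_injective F ?_
  intro K K' h
  ext g
  rw [hF K g, hF K' g, h]

/-- Let `Γ` be a finitely generated group, `φ` an injective endomorphism of
`Γ`, and `H ≤ Γ` a torsion-free subgroup of finite index.  Then there exist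
integers `m, n > 0` such that `φ^m` maps `φ^{-n}(H)` into `φ^{-n}(H)`. -/
theorem exists_iterate_maps_preimage_into_itself (Γ : Type*) [Group Γ]
    [Group.FG Γ] (φ : Monoid.End Γ) (hinj : Function.Injective φ)
    (H : Subgroup Γ) (hH : H.FiniteIndex) (htf : Monoid.IsTorsionFree H) :
    ∃ m n : ℕ, 0 < m ∧ 0 < n ∧
      Subgroup.map (φ ^ m : Monoid.End Γ) (Subgroup.comap (φ ^ n : Monoid.End Γ) H) ≤
        Subgroup.comap (φ ^ n : Monoid.End Γ) H := by
  classical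
  set N := H.index with hN
  have hNne : N ≠ 0 := hH.index_ne_zero
  -- each preimage has nonzero index bounded by N
  have hidx : ∀ k : ℕ, (Subgroup.comap (φ ^ k : Monoid.End Γ) H).index ≠ 0 ∧
      (Subgroup.comap (φ ^ k : Monoid.End Γ) H).index ≤ N := by
    intro k
    erw [Subgroup.index_comap]
    constructor
    · intro h0
      exact hNne (Subgroup.index_eq_zero_of_relIndex_eq_zero h0)
    · have := Subgroup.relIndex_le_of_le_right
        (le_top : ((φ ^ k : Monoid.End Γ) : Γ →* Γ).range ≤ ⊤)
        (by rw [Subgroup.relIndex_top_right]; exact hNne)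
      rwa [Subgroup.relIndex_top_right] at this
  -- the set of possible values is finite
  have hfin : Set.Finite {K : Subgroup Γ | K.index ≠ 0 ∧ K.index ≤ N} := by
    have : {K : Subgroup Γ | K.index ≠ 0 ∧ K.index ≤ N} ⊆
        ⋃ n ∈ Finset.Icc 1 N, {K : Subgroup Γ | K.index = n} := by
      rintro K ⟨h1, h2⟩
      exact Set.mem_biUnion (Finset.mem_Icc.mpr ⟨Nat.one_le_iff_ne_zero.mpr h1, h2⟩) rfl
    exact Set.Finite.subset
      (Set.Finite.biUnion (Finset.Icc 1 N).finite_toSet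
        (fun n hn => finite_subgroups_of_index Γ n
          (Finset.mem_Icc.mp hn).1)) this
  -- pigeonhole
  haveI : Finite {K : Subgroup Γ | K.index ≠ 0 ∧ K.index ≤ N} := hfin
  let f : ℕ → {K : Subgroup Γ | K.index ≠ 0 ∧ K.index ≤ N} :=
    fun k => ⟨Subgroup.comap (φ ^ (k + 1) : Monoid.End Γ) H, hidx (k + 1)⟩
  obtain ⟨a, b, hab, heq⟩ := Finite.exists_ne_map_eq_of_infinite f
  wlog hlt : a < b generalizing a b
  · exact this b a hab.symm heq.symm ((hab.lt_or_gt).resolve_left hlt)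
  have heq' : Subgroup.comap (φ ^ (a + 1) : Monoid.End Γ) H =
      Subgroup.comap (φ ^ (b + 1) : Monoid.End Γ) H := congrArg Subtype.val heq
  refine ⟨b - a, a + 1, Nat.sub_pos_of_lt hlt, Nat.succ_pos a, ?_⟩
  erw [Subgroup.map_le_iff_le_comap, Subgroup.comap_comap]
  have hpow : (φ ^ (b + 1) : Monoid.End Γ) = φ ^ (a + 1) * φ ^ (b - a) := by
    rw [← pow_add]; congr 1; omega
  have hcomp : ((φ ^ (a + 1) : Monoid.End Γ) : Γ →* Γ).comp
      ((φ ^ (b - a) : Monoid.End Γ) : Γ →* Γ) = (φ ^ (b + 1) : Monoid.End Γ) := by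
    rw [hpow]; rfl
  rw [hcomp, ← heq']
end

section
/- A finitely generated, residually finite, torsion-free group that is finitely co-Hopfian is cofinitely Hopfian. -/
/-- A group is *cofinitely Hopfian* if every endomorphism whose image has
finite index is an automorphism (i.e. is bijective). -/
def CofinitelyHopfian (Γ : Type*) [Group Γ] : Prop :=
  ∀ φ : Γ →* Γ, φ.range.FiniteIndex → Function.Bijective φ

/-- A group is *finitely co-Hopfian* if every injective endomorphism with
image of finite index is an automorphism. -/
def FinitelyCoHopfian (Γ : Type*) [Group Γ] : Prop :=
  ∀ φ : Γ →* Γ, Function.Injective φ → φ.range.FiniteIndex → Function.Bijective φ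

section Aux
variable {Γ : Type*} [Group Γ]

/-- Every `ℕ`-valued sequence attains its minimum. -/
lemma auxNatMin (a : ℕ → ℕ) : ∃ n₀, ∀ m, a n₀ ≤ a m := by
  obtain ⟨n₀, hn₀⟩ := Nat.sInf_mem (⟨a 0, 0, rfl⟩ : (Set.range a).Nonempty)
  exact ⟨n₀, fun m => hn₀ ▸ Nat.sInf_le ⟨m, rfl⟩⟩

/-- Homs from a f.g. group to a finite group form a finite set. -/
lemma auxFiniteHom (Q : Type*) [Group Q] [Finite Q] [Group.FG Γ] :
    Finite (Γ →* Q) := by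
  obtain ⟨S, hS, hfin⟩ := Group.fg_iff.mp ‹Group.FG Γ›
  haveI : Finite S := hfin.to_subtype
  refine Finite.of_injective (fun f (s : S) => f s.1) ?_
  intro f g hfg
  exact MonoidHom.eq_of_eqOn_dense hS fun x hx => congrFun hfg ⟨x, hx⟩

/-- Iterates of an endomorphism. -/
def iter (φ : Γ →* Γ) : ℕ → (Γ →* Γ)
  | 0 => MonoidHom.id Γ
  | n + 1 => φ.comp (iter φ n)

@[simp] lemma iter_zero (φ : Γ →* Γ) (x : Γ) : iter φ 0 x = x := rfl

lemma iter_succ (φ : Γ →* Γ) (n : ℕ) (x : Γ) : iter φ (n + 1) x = φ (iter φ n x) := rfl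

lemma iter_comm (φ : Γ →* Γ) (n : ℕ) (x : Γ) : φ (iter φ n x) = iter φ n (φ x) := by
  induction n with
  | zero => rfl
  | succ n ih => rw [iter_succ, iter_succ, ih]

lemma iter_add (φ : Γ →* Γ) (m n : ℕ) (x : Γ) :
    iter φ (m + n) x = iter φ m (iter φ n x) := by
  induction n with
  | zero => rfl
  | succ n ih =>
      have : m + (n + 1) = (m + n) + 1 := rfl
      rw [this, iter_succ, ih, iter_comm, iter_succ]

lemma iter_range_finiteIndex (φ : Γ →* Γ) (hφ : φ.range.FiniteIndex) (n : ℕ) :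
    (iter φ n).range.FiniteIndex := by
  induction n with
  | zero =>
      refine ⟨?_⟩
      have : (iter φ 0).range = ⊤ := by
        ext x; simp [MonoidHom.mem_range]
      rw [this, Subgroup.index_top]; exact one_ne_zero
  | succ n ih =>
      have hr : (iter φ (n + 1)).range = (iter φ n).range.map φ := by
        show (φ.comp (iter φ n)).range = _
        rw [MonoidHom.range_comp]
      refine ⟨?_⟩
      rw [hr, Subgroup.index_map]
      haveI := ih
      have h1 : ((iter φ n).range ⊔ φ.ker).index ≠ 0 :=
        (Subgroup.finiteIndex_of_le le_sup_left).index_ne_zero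
      exact mul_ne_zero h1 hφ.index_ne_zero

end Aux


section Deep
variable {Γ : Type*} [Group Γ]

/-- A kernel element lying in every iterated image is trivial. -/
lemma deep_kernel_trivial [Group.FG Γ] (hrf : ResiduallyFinite Γ) (φ : Γ →* Γ)
    (y : Γ) (hy1 : φ y = 1) (hy2 : ∀ m, ∃ g, iter φ m g = y) : y = 1 := by
  by_contra hy
  obtain ⟨N, hNnorm, hNfin, hyN⟩ := hrf y hy
  haveI := hNnorm
  haveI := hNfin
  haveI : Finite (Γ ⧸ N) := Subgroup.finite_quotient_of_finiteIndex
  haveI : Finite (Γ →* Γ ⧸ N) := auxFiniteHom _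
  set I : Subgroup Γ := ⨅ ψ : Γ →* Γ ⧸ N, ψ.ker with hI
  haveI hInorm : I.Normal := by
    refine ⟨fun g hg x => Subgroup.mem_iInf.mpr fun ψ => ?_⟩
    exact ψ.normal_ker.conj_mem g (Subgroup.mem_iInf.mp hg ψ) x
  haveI hIfin : I.FiniteIndex := by
    refine Subgroup.finiteIndex_iInf fun ψ => ⟨?_⟩
    rw [Subgroup.index_ker]
    exact Nat.card_pos.ne'
  have hIN : I ≤ N := by
    have := iInf_le (fun ψ : Γ →* Γ ⧸ N => ψ.ker) (QuotientGroup.mk' N)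
    rwa [QuotientGroup.ker_mk'] at this
  have hIinv : I ≤ I.comap φ := by
    rw [hI, Subgroup.comap_iInf]
    refine le_iInf fun ψ => ?_
    have h1 : I ≤ (ψ.comp φ).ker := iInf_le _ (ψ.comp φ)
    rwa [← MonoidHom.comap_ker] at h1
  haveI : Finite (Γ ⧸ I) := Subgroup.finite_quotient_of_finiteIndex
  set f : Γ ⧸ I →* Γ ⧸ I := QuotientGroup.map I I φ hIinv with hf
  have hmk : ∀ z : Γ, f (z : Γ ⧸ I) = ((φ z : Γ) : Γ ⧸ I) := fun z =>
    QuotientGroup.map_mk I I φ hIinv z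
  have hiter : ∀ (m : ℕ) (g : Γ), (f : Γ ⧸ I → Γ ⧸ I)^[m] (g : Γ ⧸ I)
      = ((iter φ m g : Γ) : Γ ⧸ I) := by
    intro m
    induction m with
    | zero => intro g; rfl
    | succ m ih =>
        intro g
        rw [Function.iterate_succ_apply', ih, hmk, iter_succ]
  set S : ℕ → Set (Γ ⧸ I) := fun m => Set.range ((f : Γ ⧸ I → Γ ⧸ I)^[m]) with hSdef
  have hS_anti : ∀ m, S (m + 1) ⊆ S m := by
    rintro m _ ⟨x, rfl⟩
    exact ⟨f x, (Function.iterate_succ_apply (f : Γ ⧸ I → Γ ⧸ I) m x).symm⟩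
  have hfinS : ∀ m, (S m).Finite := fun m => Set.toFinite _
  obtain ⟨n, hn⟩ := auxNatMin fun m => (S m).ncard
  have hstab : S (n + 1) = S n :=
    Set.eq_of_subset_of_ncard_le (hS_anti n) (hn (n + 1)) (hfinS n)
  have himg : f '' S n = S n := by
    have : f '' S n = S (n + 1) := by
      rw [hSdef]
      show f '' Set.range _ = Set.range _
      rw [← Set.range_comp, ← Function.iterate_succ']
    rw [this, hstab]
  have hmaps : Set.MapsTo f (S n) (S n) := fun x hx => himg ▸ Set.mem_image_of_mem f hx
  have hsurj : Set.SurjOn f (S n) (S n) := by rw [Set.SurjOn, himg]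
  have hinj : Set.InjOn f (S n) :=
    (((hfinS n).surjOn_iff_bijOn_of_mapsTo hmaps).mp hsurj).injOn
  obtain ⟨g, hg⟩ := hy2 n
  have hyS : (y : Γ ⧸ I) ∈ S n := ⟨(g : Γ ⧸ I), by rw [hiter n g, hg]⟩
  have h1S : (1 : Γ ⧸ I) ∈ S n := by
    refine ⟨((1 : Γ) : Γ ⧸ I), ?_⟩
    rw [hiter n 1, map_one]
    simp
  have heq : f (y : Γ ⧸ I) = f (1 : Γ ⧸ I) := by
    rw [hmk y, hy1]
    simp
  have : (y : Γ ⧸ I) = ((1 : Γ) : Γ ⧸ I) := hinj hyS h1S (by rw [heq]; simp)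
  exact hyN (hIN ((QuotientGroup.eq_one_iff y).mp this))

end Deep

open scoped Pointwise in
/-- A finitely generated, residually finite, torsion-free group that is
finitely co-Hopfian is cofinitely Hopfian. -/
theorem finitelyCoHopfian_implies_cofinitelyHopfian (Γ : Type*) [Group Γ]
    [Group.FG Γ] (hrf : ResiduallyFinite Γ) (htf : Monoid.IsTorsionFree Γ)
    (h : FinitelyCoHopfian Γ) : CofinitelyHopfian Γ := by
  intro φ hφ
  haveI := hφ
  set V : ℕ → Subgroup Γ := fun n => (iter φ n).ker ⊔ φ.range with hV
  have hker_mono : ∀ n, (iter φ n).ker ≤ (iter φ (n + 1)).ker := by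
    intro n x hx
    have hx' : iter φ n x = 1 := hx
    show iter φ (n + 1) x = 1
    rw [iter_succ, hx', map_one]
  have hVmono : Monotone V :=
    monotone_nat_of_le_succ fun n => sup_le_sup_right (hker_mono n) _
  have hVfin : ∀ n, (V n).FiniteIndex := fun n => Subgroup.finiteIndex_of_le le_sup_right
  obtain ⟨n₀, hmin⟩ := auxNatMin fun n => (V n).index
  have hVeq : ∀ m, n₀ ≤ m → V m = V n₀ := by
    intro m hm
    have hle : V n₀ ≤ V m := hVmono hm
    have hne : (V n₀).index ≠ 0 := (hVfin n₀).index_ne_zero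
    have hlt : (V m).index ≤ (V n₀).index :=
      Nat.le_of_dvd (Nat.pos_of_ne_zero hne) (Subgroup.index_dvd_of_le hle)
    have heq : (V m).index = (V n₀).index := le_antisymm hlt (hmin m)
    have h2 := Subgroup.relIndex_mul_index hle
    have hpos : 0 < (V m).index := by omega
    have hrel : (V n₀).relIndex (V m) = 1 :=
      Nat.eq_of_mul_eq_mul_right hpos (by rw [h2, one_mul, heq])
    exact le_antisymm (Subgroup.relIndex_eq_one.mp hrel) hle
  -- key stabilization property
  have key : ∀ x, iter φ (n₀ + 1) x = 1 → iter φ n₀ x = 1 := by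
    intro x hx
    have claim : ∀ j, ∃ z, iter φ (n₀ + j + 1) z = 1 ∧ iter φ (n₀ + j) z = iter φ n₀ x := by
      intro j
      induction j with
      | zero => exact ⟨x, hx, rfl⟩
      | succ j ih =>
          obtain ⟨z, hz1, hz2⟩ := ih
          have hzV : z ∈ V (n₀ + j) := by
            have hmem : z ∈ V (n₀ + j + 1) := Subgroup.mem_sup_left (MonoidHom.mem_ker.mpr hz1)
            rwa [hVeq (n₀ + j + 1) (by omega), ← hVeq (n₀ + j) (by omega)] at hmem
          have hmul : z ∈ ((iter φ (n₀ + j)).ker : Set Γ) * (φ.range : Set Γ) := by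
            rw [← Subgroup.normal_mul]; exact hzV
          rw [Set.mem_mul] at hmul
          obtain ⟨a, ha, r, hr, hzar⟩ := hmul
          obtain ⟨b, hb⟩ := hr
          subst hb
          subst hzar
          have ha' : iter φ (n₀ + j) a = 1 := ha
          have e1 : iter φ (n₀ + j) (a * φ b) = iter φ ((n₀ + j) + 1) b := by
            rw [map_mul, ha', one_mul, iter_succ, iter_comm]
          have ha'' : iter φ ((n₀ + j) + 1) a = 1 := by
            rw [iter_succ, ha', map_one]
          have e2 : iter φ ((n₀ + j) + 1) (a * φ b) = iter φ ((n₀ + j) + 1 + 1) b := by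
            rw [map_mul, ha'', one_mul, iter_succ φ (n₀ + j + 1) b, iter_comm]
          refine ⟨b, ?_, ?_⟩
          · show iter φ ((n₀ + j) + 1 + 1) b = 1
            rw [← e2]; exact hz1
          · show iter φ ((n₀ + j) + 1) b = iter φ n₀ x
            rw [← e1]; exact hz2
    have hy1 : φ (iter φ n₀ x) = 1 := hx
    have hy2 : ∀ m, ∃ g, iter φ m g = iter φ n₀ x := by
      intro m
      obtain ⟨z, _, hz2⟩ := claim m
      refine ⟨iter φ n₀ z, ?_⟩
      rw [← iter_add, Nat.add_comm m n₀]
      exact hz2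
    exact deep_kernel_trivial hrf φ _ hy1 hy2
  -- kernel is trivial
  have hker : ∀ k : Γ, φ k = 1 → k = 1 := by
    intro k hk
    by_contra hk1
    haveI := iter_range_finiteIndex φ hφ n₀
    haveI : Finite (Γ ⧸ (iter φ n₀).range) :=
      Subgroup.finite_quotient_of_finiteIndex
    have main : ∀ i j : ℕ, i < j →
        ((k ^ i : Γ) : Γ ⧸ (iter φ n₀).range) = ((k ^ j : Γ) : Γ ⧸ (iter φ n₀).range) → False := by
      intro i j hlt heq
      have hmem : k ^ (j - i) ∈ (iter φ n₀).range := by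
        have hq := QuotientGroup.eq.mp heq
        have hkj : k ^ j = k ^ i * k ^ (j - i) := by
          rw [← pow_add]; congr 1; omega
        rwa [hkj, inv_mul_cancel_left] at hq
      obtain ⟨g, hg⟩ := hmem
      have hgk : iter φ (n₀ + 1) g = 1 := by
        rw [iter_succ, hg, map_pow, hk, one_pow]
      have h0 : iter φ n₀ g = 1 := key g hgk
      have hpow1 : k ^ (j - i) = 1 := by rw [← hg, h0]
      exact (htf k hk1) (isOfFinOrder_iff_pow_eq_one.mpr ⟨j - i, by omega, hpow1⟩)
    obtain ⟨i, j, hij, hpow⟩ := Finite.exists_ne_map_eq_of_infinite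
      fun i : ℕ => ((k ^ i : Γ) : Γ ⧸ (iter φ n₀).range)
    rcases (Ne.lt_or_gt hij) with hlt | hlt
    · exact main i j hlt hpow
    · exact main j i hlt hpow.symm
  have hinj : Function.Injective φ := by
    intro a b hab
    have h1 : φ (a * b⁻¹) = 1 := by rw [map_mul, map_inv, hab, mul_inv_cancel]
    exact mul_inv_eq_one.mp (hker _ h1)
  exact h φ hinj hφ
end

section
/- Let Γ = F ⋊_θ ℤ where F is a finitely generated free group of rank r ≥ 2. If the outer automorphism class [θ] has finite order d in Out(F), then Γ is not finitely hyper-Hopfian: for any s ≡ 1 mod d with s > 1, Γ has a proper normal subgroup N of index s with Γ/N cyclic and N ≅ Γ. -/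
open SemidirectProduct

/-- Let `Γ = F ⋊_θ ℤ` where `F` is a free group of rank `r ≥ 2` and the class
`[θ]` of `θ` in `Out(F)` has finite order `d` (i.e. `θ^d` is an inner
automorphism).  Then for any `s > 1` with `s ≡ 1 (mod d)`, `Γ` has a proper
normal subgroup `N` of index `s` with cyclic quotient `Γ/N` and `N ≅ Γ`;
in particular `Γ` is not finitely hyper-Hopfian. -/
theorem freeByCyclic_not_finitelyHyperHopfian_of_finiteOrder (r : ℕ) (hr : 2 ≤ r)
    (θ : MulAut (FreeGroup (Fin r))) (d : ℕ) (hd : 0 < d)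
    (hinner : ∃ g : FreeGroup (Fin r), θ ^ d = MulAut.conj g) :
    ∀ s : ℕ, 1 < s → s % d = 1 →
      ∃ N : Subgroup
          (SemidirectProduct (FreeGroup (Fin r)) (Multiplicative ℤ)
            (zpowersHom (MulAut (FreeGroup (Fin r))) θ)),
        N.Normal ∧ N ≠ ⊤ ∧ N.index = s ∧
        Nonempty (N ≃*
          SemidirectProduct (FreeGroup (Fin r)) (Multiplicative ℤ)
            (zpowersHom (MulAut (FreeGroup (Fin r))) θ)) ∧
        -- the quotient `Γ/N` is cyclic, generated by the image of some `g`
        (∃ g, ∀ x, ∃ k : ℤ, g ^ k * x ∈ N) := by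
  intro s hs hmod
  obtain ⟨g, hg⟩ := hinner
  set φ := zpowersHom (MulAut (FreeGroup (Fin r))) θ with hφdef
  haveI : NeZero s := ⟨by omega⟩
  obtain ⟨q, hsq⟩ : ∃ q : ℕ, d * q + 1 = s := by
    refine ⟨s / d, ?_⟩
    have h1 := Nat.div_add_mod s d
    omega
  -- the element γ = (g^{-q}, s)
  set γ : SemidirectProduct (FreeGroup (Fin r)) (Multiplicative ℤ) φ :=
    ⟨(g ^ q)⁻¹, Multiplicative.ofAdd (s : ℤ)⟩ with hγ
  -- θ^s f = g^q * θ f * (g^q)⁻¹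
  have hθs : ∀ f : FreeGroup (Fin r), (θ ^ (s : ℤ)) f = g ^ q * θ f * (g ^ q)⁻¹ := by
    intro f
    rw [zpow_natCast]
    conv_lhs => rw [← hsq]
    rw [pow_succ, pow_mul, hg, ← map_pow, MulAut.mul_apply, MulAut.conj_apply]
  -- key commuting relation
  have hkey : ∀ f : FreeGroup (Fin r), γ * inl f = inl (θ f) * γ := by
    intro f
    ext
    · show γ.left * φ γ.right (inl f).left = (θ f) * φ (inl (θ f) : _).right γ.left
      simp only [hγ, left_inl, right_inl, map_one, MulAut.one_apply]
      rw [hφdef, zpowersHom_apply]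
      simp only [toAdd_ofAdd]
      rw [hθs]
      group
    · show γ.right * (inl f : FreeGroup (Fin r) ⋊[φ] Multiplicative ℤ).right = (inl (θ f) : FreeGroup (Fin r) ⋊[φ] Multiplicative ℤ).right * γ.right
      simp
  have hconj : ∀ f : FreeGroup (Fin r), γ * inl f * γ⁻¹ = inl (θ f) := by
    intro f
    rw [hkey, mul_inv_cancel_right]
  have hconjinv : ∀ f : FreeGroup (Fin r), γ⁻¹ * inl f * γ = inl (θ⁻¹ f) := by
    intro f
    have h := hkey (θ⁻¹ f)
    rw [MulAut.apply_inv_self] at h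
    calc γ⁻¹ * inl f * γ = γ⁻¹ * (inl f * γ) := by group
      _ = γ⁻¹ * (γ * inl (θ⁻¹ f)) := by rw [h]
      _ = inl (θ⁻¹ f) := by group
  have hconjn : ∀ (n : ℤ) (f : FreeGroup (Fin r)), γ ^ n * inl f * (γ ^ n)⁻¹ = inl ((θ ^ n) f) := by
    intro n
    induction n using Int.induction_on with
    | zero => intro f; simp
    | succ k ih =>
      intro f
      have hz : γ ^ ((k : ℤ) + 1) = γ ^ (k : ℤ) * γ := zpow_add_one γ k
      rw [hz, mul_inv_rev]
      calc γ ^ (k : ℤ) * γ * inl f * (γ⁻¹ * (γ ^ (k : ℤ))⁻¹)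
          = γ ^ (k : ℤ) * (γ * inl f * γ⁻¹) * (γ ^ (k : ℤ))⁻¹ := by group
        _ = γ ^ (k : ℤ) * inl (θ f) * (γ ^ (k : ℤ))⁻¹ := by rw [hconj]
        _ = inl ((θ ^ (k : ℤ)) (θ f)) := ih (θ f)
        _ = inl ((θ ^ ((k : ℤ) + 1)) f) := by
            rw [zpow_add_one, MulAut.mul_apply]
    | pred k ih =>
      intro f
      have hz : γ ^ (-(k : ℤ) - 1) = γ ^ (-(k : ℤ)) * γ⁻¹ := by
        rw [zpow_sub_one]
      rw [hz, mul_inv_rev, inv_inv]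
      calc γ ^ (-(k : ℤ)) * γ⁻¹ * inl f * (γ * (γ ^ (-(k : ℤ)))⁻¹)
          = γ ^ (-(k : ℤ)) * (γ⁻¹ * inl f * γ) * (γ ^ (-(k : ℤ)))⁻¹ := by group
        _ = γ ^ (-(k : ℤ)) * inl (θ⁻¹ f) * (γ ^ (-(k : ℤ)))⁻¹ := by rw [hconjinv]
        _ = inl ((θ ^ (-(k : ℤ))) (θ⁻¹ f)) := ih (θ⁻¹ f)
        _ = inl ((θ ^ (-(k : ℤ) - 1)) f) := by
            rw [zpow_sub_one, MulAut.mul_apply]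
  -- lift compatibility
  have hcompat : ∀ m : Multiplicative ℤ,
      (inl : FreeGroup (Fin r) →* SemidirectProduct (FreeGroup (Fin r)) (Multiplicative ℤ) φ).comp (φ m).toMonoidHom
        = (MulAut.conj ((zpowersHom (SemidirectProduct (FreeGroup (Fin r)) (Multiplicative ℤ) φ) γ) m)).toMonoidHom.comp
            (inl : FreeGroup (Fin r) →* SemidirectProduct (FreeGroup (Fin r)) (Multiplicative ℤ) φ) := by
    intro m
    refine MonoidHom.ext fun f => ?_
    show inl ((θ ^ Multiplicative.toAdd m) f)
      = γ ^ Multiplicative.toAdd m * inl f * (γ ^ Multiplicative.toAdd m)⁻¹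
    exact (hconjn _ f).symm
  set Φ := SemidirectProduct.lift inl (zpowersHom _ γ) hcompat with hΦ
  have hΦinl : ∀ f : FreeGroup (Fin r), Φ (inl f) = inl f := fun f => lift_inl _ _ _ f
  have hΦinr : ∀ m : Multiplicative ℤ, Φ (inr m) = γ ^ m.toAdd := fun m => lift_inr _ _ _ m
  have hrγ : rightHom γ = Multiplicative.ofAdd (s : ℤ) := rfl
  have hright : ∀ x, rightHom (Φ x) = Multiplicative.ofAdd (x.right.toAdd * (s : ℤ)) := by
    intro x
    have hx : x = inl x.left * inr x.right := (inl_left_mul_inr_right x).symm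
    conv_lhs => rw [hx]
    rw [map_mul, map_mul, hΦinl, hΦinr, rightHom_inl, map_zpow, one_mul, hrγ,
      ← ofAdd_zsmul, smul_eq_mul]
  -- injectivity of Φ
  have hinj : Function.Injective Φ := by
    rw [injective_iff_map_eq_one]
    intro a ha
    have h1 : a.right.toAdd * (s : ℤ) = 0 := by
      have h0 := hright a
      rw [ha, map_one] at h0
      have h2 := congrArg Multiplicative.toAdd h0
      rw [toAdd_ofAdd, toAdd_one] at h2
      exact h2.symm
    have h2 : a.right = 1 := by
      have hs0 : (s : ℤ) ≠ 0 := Int.natCast_ne_zero.mpr (by omega)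
      have h3 : Multiplicative.toAdd a.right = 0 := by
        rcases mul_eq_zero.1 h1 with h | h
        · exact h
        · exact absurd h hs0
      exact Multiplicative.toAdd.injective (by rw [h3, toAdd_one])
    have hx : a = inl a.left * inr a.right := (inl_left_mul_inr_right a).symm
    rw [h2, map_one, mul_one] at hx
    rw [hx, hΦinl] at ha
    rw [hx, show a.left = 1 from inl_injective ha, map_one]
  -- the projection to ZMod s
  set ρ : SemidirectProduct (FreeGroup (Fin r)) (Multiplicative ℤ) φ →* Multiplicative (ZMod s) :=
    (AddMonoidHom.toMultiplicative (Int.castAddHom (ZMod s))).comp rightHom with hρ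
  have hρx : ∀ x : SemidirectProduct (FreeGroup (Fin r)) (Multiplicative ℤ) φ,
      ρ x = Multiplicative.ofAdd ((x.right.toAdd : ZMod s)) := fun x => rfl
  set N := ρ.ker with hN
  have hmem : ∀ x : SemidirectProduct (FreeGroup (Fin r)) (Multiplicative ℤ) φ,
      x ∈ N ↔ (s : ℤ) ∣ x.right.toAdd := by
    intro x
    rw [hN, MonoidHom.mem_ker, hρx, ← ZMod.intCast_zmod_eq_zero_iff_dvd]
    constructor
    · intro h; simpa using congrArg Multiplicative.toAdd h
    · intro h; rw [h]; rfl
  have hρsurj : Function.Surjective ρ := by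
    intro z
    obtain ⟨m, hm⟩ := ZMod.intCast_surjective (n := s) z.toAdd
    refine ⟨inr (Multiplicative.ofAdd m), ?_⟩
    rw [hρx]
    simp [hm]
  refine ⟨N, MonoidHom.normal_ker ρ, ?_, ?_, ?_, ?_⟩
  · -- N ≠ ⊤
    intro h
    have h1 : N.index = 1 := by rw [h, Subgroup.index_top]
    have h2 : N.index = s := by
      rw [hN, Subgroup.index_ker, MonoidHom.range_eq_top.2 hρsurj]
      rw [Subgroup.card_top, Nat.card_congr Multiplicative.toAdd, Nat.card_zmod]
    omega
  · -- index
    rw [hN, Subgroup.index_ker, MonoidHom.range_eq_top.2 hρsurj]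
    rw [Subgroup.card_top, Nat.card_congr Multiplicative.toAdd, Nat.card_zmod]
  · -- N ≃* Γ
    have hrange : Φ.range = N := by
      apply le_antisymm
      · rintro _ ⟨x, rfl⟩
        rw [hmem]
        refine ⟨x.right.toAdd, ?_⟩
        have h2 := congrArg Multiplicative.toAdd (hright x)
        rw [toAdd_ofAdd] at h2
        calc Multiplicative.toAdd (Φ x).right
            = Multiplicative.toAdd (rightHom (Φ x)) := rfl
          _ = x.right.toAdd * (s : ℤ) := h2
          _ = (s : ℤ) * x.right.toAdd := mul_comm _ _
      · intro x hx
        rw [hmem] at hx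
        obtain ⟨k, hk⟩ := hx
        have hy : rightHom (x * (Φ (inr (Multiplicative.ofAdd k)))⁻¹) = 1 := by
          rw [map_mul, map_inv, hΦinr]
          have hγk : rightHom (γ ^ (Multiplicative.ofAdd k).toAdd)
              = Multiplicative.ofAdd (k * (s : ℤ)) := by
            rw [map_zpow]
            show (Multiplicative.ofAdd (s : ℤ)) ^ (Multiplicative.ofAdd k).toAdd = _
            rw [← ofAdd_zsmul, smul_eq_mul]
            simp
          rw [hγk]
          have hx2 : rightHom x = Multiplicative.ofAdd ((s : ℤ) * k) := by
            show x.right = _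
            rw [← hk]
            simp
          rw [hx2]
          rw [← ofAdd_neg, ← ofAdd_add]
          rw [mul_comm] at hk ⊢
          simp
        have : x * (Φ (inr (Multiplicative.ofAdd k)))⁻¹ ∈
            (inl : FreeGroup (Fin r) →* SemidirectProduct (FreeGroup (Fin r)) (Multiplicative ℤ) φ).range := by
          rw [range_inl_eq_ker_rightHom]
          exact hy
        obtain ⟨f, hf⟩ := this
        refine ⟨inl f * inr (Multiplicative.ofAdd k), ?_⟩
        rw [map_mul, hΦinl, hf]
        group
    exact ⟨(MulEquiv.subgroupCongr hrange.symm).trans (MonoidHom.ofInjective hinj).symm⟩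
  · -- cyclic quotient
    refine ⟨inr (Multiplicative.ofAdd (1 : ℤ)), fun x => ⟨-x.right.toAdd, ?_⟩⟩
    rw [hmem]
    have h1 : (inr (Multiplicative.ofAdd (1 : ℤ)) ^ (-x.right.toAdd) * x).right
        = Multiplicative.ofAdd (-x.right.toAdd) * x.right := by
      rw [← map_zpow, mul_right, right_inr, ← ofAdd_zsmul, smul_eq_mul, mul_one]
    rw [h1]
    have h2 : Multiplicative.toAdd (Multiplicative.ofAdd (-x.right.toAdd) * x.right) = 0 := by
      simp
    rw [h2]
    exact dvd_zero _
end

section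
/- Let Γ = F_r ⋊_θ ℤ. The centre of Γ is trivial if and only if the image [θ] of θ in Out(F_r) has infinite order (assuming r ≥ 2). -/
namespace FreeGroup

variable {α : Type*} [DecidableEq α]

/-- The "no cancellation" relation between adjacent letters. -/
def NC (x y : α × Bool) : Prop := ¬ (x.1 = y.1 ∧ x.2 = !y.2)

lemma chain'_reduce (M : List (α × Bool)) : (reduce M).Chain' NC := by
  induction M with
  | nil => exact List.isChain_nil
  | cons x L ih =>
      rw [reduce.cons]
      rcases h : reduce L with _ | ⟨hd, tl⟩
      · exact List.isChain_singleton _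
      · rw [h] at ih
        by_cases hc : x.1 = hd.1 ∧ x.2 = !hd.2
        · simpa [hc, List.Chain'] using ih.tail
        · simp only [hc, if_false]
          exact List.isChain_cons_cons.mpr ⟨hc, ih⟩

lemma reduce_eq_self_of_chain' {M : List (α × Bool)} (h : M.Chain' NC) :
    reduce M = M := by
  induction M with
  | nil => rfl
  | cons x L ih =>
      rw [reduce.cons, ih h.tail]
      cases L with
      | nil => rfl
      | cons y tl =>
          have hxy : NC x y := (List.isChain_cons_cons.mp h).1
          simp [NC] at hxy
          by_cases h1 : x.1 = y.1
          · simp [h1, hxy h1]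
          · simp [h1]

lemma toWord_mul_of_chain' {a b : FreeGroup α}
    (h : (a.toWord ++ b.toWord).Chain' NC) :
    (a * b).toWord = a.toWord ++ b.toWord := by
  conv_lhs => rw [← mk_toWord (x := a), ← mk_toWord (x := b)]
  rw [mul_mk, toWord_mk, reduce_eq_self_of_chain' h]

lemma chain'_toWord (a : FreeGroup α) : a.toWord.Chain' NC := by
  rw [← reduce_toWord a]; exact chain'_reduce _

/-- Key computation: if `a` commutes with the single-letter word `ℓ` and there is
no cancellation at either end, then `toWord a ++ [ℓ] = ℓ :: toWord a`. -/
lemma comm_letter {a : FreeGroup α} {l : α × Bool}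
    (h1 : ∀ x ∈ a.toWord.getLast?, NC x l)
    (h2 : ∀ y ∈ a.toWord.head?, NC l y)
    (hc : a * mk [l] = mk [l] * a) :
    a.toWord ++ [l] = l :: a.toWord := by
  have hw : (mk [l] : FreeGroup α).toWord = [l] := by
    rw [toWord_mk, reduce_singleton]
  have e1 : (a * mk [l]).toWord = a.toWord ++ [l] := by
    rw [toWord_mul_of_chain'] <;> rw [hw]
    exact List.isChain_append.mpr ⟨chain'_toWord a, List.isChain_singleton _,
      by simpa using h1⟩
  have e2 : (mk [l] * a).toWord = l :: a.toWord := by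
    have : ([l] : List (α × Bool)) ++ a.toWord = l :: a.toWord := rfl
    rw [toWord_mul_of_chain'] <;> rw [hw, this]
    · exact List.isChain_cons.mpr ⟨h2, chain'_toWord a⟩
  rw [← e1, ← e2, hc]

lemma all_eq_of_append_singleton_eq {β : Type*} :
    ∀ (l : List β) (a : β), l ++ [a] = a :: l → ∀ x ∈ l, x = a := by
  intro l
  induction l with
  | nil => simp
  | cons b t ih =>
      intro a h x hx
      rw [List.cons_append, List.cons_eq_cons] at h
      obtain ⟨rfl, h2⟩ := h
      rcases List.mem_cons.mp hx with rfl | hx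
      · rfl
      · exact ih b h2 x hx

lemma exists_good_letter {r : ℕ} (hr : 2 ≤ r) (c d : Fin r × Bool) :
    ∃ l : Fin r × Bool, NC d l ∧ NC l c := by
  by_cases h : c.1 = d.1
  · set k : Fin r := if c.1 = ⟨0, by omega⟩ then ⟨1, by omega⟩ else ⟨0, by omega⟩ with hk
    have hkc : k ≠ c.1 := by
      rw [hk]; split
      · next he => rw [he]; simp [Fin.ext_iff]
      · next he => exact fun hcon => he hcon.symm
    refine ⟨(k, true), ?_, ?_⟩
    · rintro ⟨ha, -⟩; exact hkc ((h.trans ha).symm)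
    · rintro ⟨ha, -⟩; exact hkc ha
  · refine ⟨(c.1, c.2), fun ⟨ha, _⟩ => h ha.symm, fun ⟨_, hb⟩ => ?_⟩
    simp at hb

/-- A free group of rank at least 2 has trivial centre. -/
lemma eq_one_of_forall_comm {r : ℕ} (hr : 2 ≤ r) {a : FreeGroup (Fin r)}
    (h : ∀ b, a * b = b * a) : a = 1 := by
  by_contra ha
  have hne : a.toWord ≠ [] := fun h' => ha (toWord_eq_nil_iff.mp h')
  set L := a.toWord with hLdef
  obtain ⟨c, T, hL⟩ := List.exists_cons_of_ne_nil hne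
  have hhead : L.head? = some c := by rw [hL]; rfl
  obtain ⟨d, hlast⟩ : ∃ d, L.getLast? = some d :=
    ⟨_, List.getLast?_eq_getLast_of_ne_nil hne⟩
  have hdL : d ∈ L := by
    obtain ⟨hne', heq⟩ := List.mem_getLast?_eq_getLast (Option.mem_def.mpr hlast)
    rw [heq]; exact List.getLast_mem _
  have hcL : c ∈ L := by rw [hL]; exact List.mem_cons_self
  have key : ∀ l : Fin r × Bool, NC d l → NC l c → ∀ x ∈ L, x = l := by
    intro l hd1 hd2
    refine all_eq_of_append_singleton_eq L l (comm_letter ?_ ?_ (h _))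
    · intro x hx
      rw [← hLdef, hlast] at hx
      simp only [Option.mem_some_iff] at hx
      exact hx ▸ hd1
    · intro y hy
      rw [← hLdef, hhead] at hy
      simp only [Option.mem_some_iff] at hy
      exact hy ▸ hd2
  obtain ⟨l, hd1, hd2⟩ := exists_good_letter hr c d
  have hall := key l hd1 hd2
  have hcl : c = l := hall c hcL
  have hdl : d = l := hall d hdL
  obtain ⟨k, hk⟩ : ∃ k : Fin r, k ≠ l.1 := by
    rcases eq_or_ne l.1 ⟨0, by omega⟩ with he | he
    · exact ⟨⟨1, by omega⟩, by rw [he]; simp [Fin.ext_iff]⟩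
    · exact ⟨⟨0, by omega⟩, he.symm⟩
  have hall' := key (k, true) (fun ⟨hx, _⟩ => hk (by simp only [] at hx; rw [← hx, hdl]))
    (fun ⟨hx, _⟩ => hk (by simp only [] at hx; rw [hx, hcl]))
  have h1 : c = l := hcl
  have h2 : c = (k, true) := hall' c hcL
  exact hk (congrArg Prod.fst (h2.symm.trans h1))

end FreeGroup

section Main

open SemidirectProduct Multiplicative

variable {r : ℕ}

lemma fixed_of_pow_eq_conj (hr : 2 ≤ r) (θ : MulAut (FreeGroup (Fin r)))
    {d : ℕ} {g : FreeGroup (Fin r)} (hg : θ ^ d = MulAut.conj g) :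
    θ g = g := by
  have hcomm : θ * (θ ^ d) = (θ ^ d) * θ := ((Commute.refl θ).pow_right d).symm.eq.symm
  rw [hg] at hcomm
  have hx : ∀ x, θ g * x * (θ g)⁻¹ = g * x * g⁻¹ := by
    intro x
    have h2 := congrArg (fun f : MulAut (FreeGroup (Fin r)) => f (θ.symm x)) hcomm
    simp only [MulAut.mul_apply, MulAut.conj_apply, MulEquiv.apply_symm_apply,
      map_mul, map_inv] at h2
    exact h2
  have hcen : ∀ x, (g⁻¹ * θ g) * x = x * (g⁻¹ * θ g) := by
    intro x
    calc (g⁻¹ * θ g) * x = g⁻¹ * (θ g * x * (θ g)⁻¹) * θ g := by group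
      _ = g⁻¹ * (g * x * g⁻¹) * θ g := by rw [hx x]
      _ = x * (g⁻¹ * θ g) := by group
  have h1 : g⁻¹ * θ g = 1 := FreeGroup.eq_one_of_forall_comm hr hcen
  exact (inv_mul_eq_one.mp h1).symm

lemma zpow_fixed (θ : MulAut (FreeGroup (Fin r))) {g : FreeGroup (Fin r)}
    (hfix : θ g = g) : ∀ n : ℤ, (θ ^ n) g = g := by
  have hinv : θ⁻¹ g = g := by
    conv_lhs => rw [← hfix]
    exact θ.symm_apply_apply g
  intro n
  induction n using Int.induction_on with
  | zero => rfl
  | succ i ih => rw [add_comm, zpow_add, zpow_one, MulAut.mul_apply, ih, hfix]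
  | pred i ih =>
      rw [sub_eq_add_neg, add_comm, zpow_add, MulAut.mul_apply, ih, zpow_neg, zpow_one]
      exact hinv

end Main

/-- Let `Γ = F_r ⋊_θ ℤ` with `r ≥ 2`.  The centre of `Γ` is trivial if and
only if the image `[θ]` of `θ` in `Out(F_r)` has infinite order, i.e. no
positive power of `θ` is an inner automorphism. -/
theorem freeByCyclic_center_trivial_iff (r : ℕ) (hr : 2 ≤ r)
    (θ : MulAut (FreeGroup (Fin r))) :
    Subgroup.center
        (SemidirectProduct (FreeGroup (Fin r)) (Multiplicative ℤ)
          (zpowersHom (MulAut (FreeGroup (Fin r))) θ)) = ⊥ ↔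
      ∀ d : ℕ, 0 < d → ¬ ∃ g : FreeGroup (Fin r), θ ^ d = MulAut.conj g := by
  set F := FreeGroup (Fin r)
  set φ := zpowersHom (MulAut F) θ with hφ
  have hφ_apply : ∀ (m : Multiplicative ℤ), φ m = θ ^ (Multiplicative.toAdd m) := by
    intro m; rfl
  constructor
  · -- center trivial → no positive power inner
    intro hcent d hd ⟨g, hg⟩
    have hfix : θ g = g := fixed_of_pow_eq_conj hr θ hg
    set z : SemidirectProduct F (Multiplicative ℤ) φ :=
      ⟨g⁻¹, Multiplicative.ofAdd (d : ℤ)⟩ with hz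
    have hzc : z ∈ Subgroup.center _ := by
      rw [Subgroup.mem_center_iff]
      intro w
      have hleft : (w * z).left = (z * w).left := by
        simp only [SemidirectProduct.mul_left, hz]
        rw [hφ_apply, hφ_apply]
        have h1 : (θ ^ (Multiplicative.toAdd w.right)) g⁻¹ = g⁻¹ := by
          rw [map_inv, zpow_fixed θ hfix]
        have h2 : (θ ^ (Multiplicative.toAdd (Multiplicative.ofAdd (d : ℤ)))) w.left
            = g * w.left * g⁻¹ := by
          rw [toAdd_ofAdd, zpow_natCast, hg, MulAut.conj_apply]
        rw [h1, h2]
        group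
        simp
      have hright : (w * z).right = (z * w).right := by
        simp only [SemidirectProduct.mul_right]
        exact mul_comm _ _
      exact SemidirectProduct.ext hleft hright
    rw [hcent, Subgroup.mem_bot] at hzc
    have : Multiplicative.ofAdd (d : ℤ) = (1 : Multiplicative ℤ) :=
      congrArg SemidirectProduct.right hzc
    have : (d : ℤ) = 0 := by
      simpa using congrArg Multiplicative.toAdd this
    omega
  · -- no positive power inner → center trivial
    intro H
    rw [eq_bot_iff]
    intro z hz
    rw [Subgroup.mem_center_iff] at hz
    set a : F := z.left with ha
    set mZ : ℤ := Multiplicative.toAdd z.right with hm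
    have hb : ∀ b : F, b * a = a * (θ ^ mZ) b := by
      intro b
      have := congrArg SemidirectProduct.left (hz (SemidirectProduct.inl b))
      simpa [hφ_apply, SemidirectProduct.mul_left] using this
    have hconj : θ ^ mZ = MulAut.conj a⁻¹ := by
      ext x
      have h2 : (θ ^ mZ) x = a⁻¹ * x * a := by
        rw [← mul_left_cancel_iff (a := a), ← hb x]; group; simp; exact mul_inv_cancel a
      rw [MulAut.conj_apply, inv_inv, h2]
    have hmZ : mZ = 0 := by
      by_contra hne
      rcases lt_or_gt_of_ne hne with hneg | hpos
      · refine H (-mZ).toNat (by omega) ⟨a, ?_⟩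
        rw [← zpow_natCast θ, Int.toNat_of_nonneg (by omega), zpow_neg, hconj,
          ← map_inv MulAut.conj, inv_inv]
      · refine H mZ.toNat (by omega) ⟨a⁻¹, ?_⟩
        rw [← zpow_natCast θ, Int.toNat_of_nonneg (by omega), hconj]
    -- mZ = 0 : a is central in F
    have hacomm : ∀ b : F, a * b = b * a := by
      intro b
      have := hb b
      rw [hmZ] at this
      simpa using this.symm
    have ha1 : a = 1 := FreeGroup.eq_one_of_forall_comm hr hacomm
    have hz1 : z.right = 1 := by
      have : Multiplicative.toAdd z.right = 0 := hmZ
      simpa using congrArg Multiplicative.ofAdd this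
    rw [Subgroup.mem_bot]
    exact SemidirectProduct.ext (by simpa using ha1) hz1
end

section
/- In the torus knot group Γ_{m,n} = ⟨a, b ∣ aⁿ = bᵐ⟩ with m, n ≥ 2 coprime, let z = aⁿ. If r is an integer with r ≡ 1 mod n and r ≡ 1 mod m, and p, q are defined by np = mq = r − 1, then the assignment a ↦ a z^p, b ↦ b z^q defines an injective endomorphism φ of Γ_{m,n} whose image has finite index, and φ is surjective if and only if r = ±1. -/
abbrev torusKnotRels (m n : ℕ) : Set (FreeGroup Bool) :=
  {FreeGroup.of true ^ n * (FreeGroup.of false ^ m)⁻¹}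

abbrev TorusKnotGroup (m n : ℕ) := PresentedGroup (torusKnotRels m n)

lemma tkg_rel (m n : ℕ) :
    (PresentedGroup.of true : TorusKnotGroup m n) ^ n = PresentedGroup.of false ^ m := by
  have h : (PresentedGroup.mk (torusKnotRels m n))
      (FreeGroup.of true ^ n * (FreeGroup.of false ^ m)⁻¹) = 1 := by
    apply (QuotientGroup.eq_one_iff _).mpr
    exact Subgroup.subset_normalClosure rfl
  simp only [map_mul, map_pow, map_inv] at h
  exact mul_inv_eq_one.mp h

lemma tkg_central (m n : ℕ) (g : TorusKnotGroup m n) :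
    Commute ((PresentedGroup.of true : TorusKnotGroup m n) ^ n) g := by
  have : g ∈ Subgroup.centralizer {(PresentedGroup.of true : TorusKnotGroup m n) ^ n} := by
    apply PresentedGroup.generated_by
    intro j
    rw [Subgroup.mem_centralizer_iff]
    rintro x rfl
    cases j
    · rw [tkg_rel]
      exact ((Commute.refl _).pow_left m).eq
    · exact ((Commute.refl _).pow_left n).eq
  exact Subgroup.mem_centralizer_iff.mp this _ rfl

/-- if `x ^ n = z` and `z` is central then `(x * z^k)^n = z^(1+nk)`. -/
lemma pow_mul_central {G : Type*} [Group G] {x z : G} (hz : ∀ g, Commute z g) {n : ℕ}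
    (k : ℤ) (hx : x ^ n = z) : (x * z ^ k) ^ n = z ^ (1 + (n : ℤ) * k) := by
  have hc : Commute x (z ^ k) := ((hz x).zpow_left k).symm
  rw [hc.mul_pow, hx, ← zpow_natCast (z ^ k) n, ← zpow_mul, zpow_add, zpow_one,
    mul_comm k (n : ℤ)]

/-- the degree map `a ↦ m`, `b ↦ n` into `Multiplicative ℤ`. -/
lemma tkg_deg_rel (m n : ℕ) : ∀ rl ∈ torusKnotRels m n,
    (FreeGroup.lift (fun x : Bool => Multiplicative.ofAdd (cond x (m : ℤ) n))) rl = 1 := by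
  rintro rl rfl
  simp only [map_mul, map_pow, map_inv, FreeGroup.lift_apply_of, Bool.cond_true, Bool.cond_false]
  rw [← ofAdd_nsmul, ← ofAdd_nsmul, nsmul_eq_mul, nsmul_eq_mul, mul_comm (m : ℤ) (n : ℤ),
    mul_inv_cancel]

/-- In `Γ_{m,n} = ⟨a, b ∣ aⁿ = bᵐ⟩` with `m, n ≥ 2` coprime, set `z = aⁿ`.
If `r ≡ 1 (mod n)` and `r ≡ 1 (mod m)`, with `np = mq = r - 1`, then
`a ↦ a z^p`, `b ↦ b z^q` defines an injective endomorphism `φ` of `Γ_{m,n}`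
whose image has finite index, and `φ` is surjective iff `r = ±1`. -/
theorem torusKnotGroup_endomorphism (m n : ℕ) (hm : 2 ≤ m) (hn : 2 ≤ n)
    (hco : Nat.Coprime m n) (r p q : ℤ)
    (hp : (n : ℤ) * p = r - 1) (hq : (m : ℤ) * q = r - 1) :
    ∃ φ : TorusKnotGroup m n →* TorusKnotGroup m n,
      φ (PresentedGroup.of true) =
          PresentedGroup.of true * (PresentedGroup.of (rels := torusKnotRels m n) true ^ n) ^ p ∧
      φ (PresentedGroup.of false) =
          PresentedGroup.of false * (PresentedGroup.of (rels := torusKnotRels m n) true ^ n) ^ q ∧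
      Function.Injective φ ∧ φ.range.FiniteIndex ∧
      (Function.Surjective φ ↔ r = 1 ∨ r = -1) := by
  classical
  set G := TorusKnotGroup m n
  set a : G := PresentedGroup.of true with ha
  set b : G := PresentedGroup.of false with hb
  set z : G := a ^ n with hzdef
  have hz : ∀ g : G, Commute z g := tkg_central m n
  have hab : a ^ n = b ^ m := tkg_rel m n
  have hzb : b ^ m = z := hab.symm
  -- the defining relation for φ
  have hkey1 : (a * z ^ p) ^ n = z ^ r := by
    rw [pow_mul_central hz p rfl]
    congr 1; omega
  have hkey2 : (b * z ^ q) ^ m = z ^ r := by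
    rw [pow_mul_central hz q hzb]
    congr 1; omega
  have hrels : ∀ rl ∈ torusKnotRels m n,
      (FreeGroup.lift (fun x : Bool => cond x (a * z ^ p) (b * z ^ q))) rl = 1 := by
    rintro rl rfl
    simp only [map_mul, map_pow, map_inv, FreeGroup.lift_apply_of, Bool.cond_true, Bool.cond_false]
    rw [hkey1, hkey2, mul_inv_cancel]
  set φ := PresentedGroup.toGroup hrels with hφdef
  have hφa : φ a = a * z ^ p := PresentedGroup.toGroup.of hrels
  have hφb : φ b = b * z ^ q := PresentedGroup.toGroup.of hrels
  have hφz : φ z = z ^ r := by rw [hzdef, map_pow, hφa, hkey1]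
  have hφzk : ∀ k : ℤ, φ (z ^ k) = z ^ (r * k) := by
    intro k; rw [map_zpow, hφz, ← zpow_mul]
  set ψ := PresentedGroup.toGroup (tkg_deg_rel m n) with hψdef
  have hψz : ψ z = Multiplicative.ofAdd ((n : ℤ) * m) := by
    rw [hzdef, map_pow, PresentedGroup.toGroup.of (tkg_deg_rel m n)]
    rw [show (cond true (m : ℤ) n) = (m : ℤ) from rfl, ← ofAdd_nsmul, nsmul_eq_mul]
  have hzpow_inj : ∀ k : ℤ, z ^ k = 1 → k = 0 := by
    intro k hk
    have h2 := congrArg ψ hk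
    rw [map_zpow, hψz, map_one, ← ofAdd_zsmul, smul_eq_mul] at h2
    have h3 : k * ((n : ℤ) * m) = 0 := by exact_mod_cast ofAdd_eq_one.mp h2
    have hnm : ((n : ℤ) * m) ≠ 0 := by positivity
    rcases mul_eq_zero.mp h3 with h | h
    · exact h
    · exact absurd h hnm
  have hr0 : r ≠ 0 := by
    intro h
    have hdvd : (n : ℤ) ∣ 1 := ⟨-p, by linarith⟩
    have := Int.le_of_dvd one_pos hdvd
    have h2 : (2 : ℤ) ≤ n := by exact_mod_cast hn
    omega
  set N := Subgroup.zpowers z with hNdef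
  haveI hN : N.Normal := by
    constructor
    intro x hx g
    obtain ⟨k, rfl⟩ := Subgroup.mem_zpowers_iff.mp hx
    have hc : g * z ^ k = z ^ k * g := (((hz g).zpow_left k)).eq.symm
    rw [hc, mul_assoc, mul_inv_cancel, mul_one]
    exact Subgroup.zpow_mem _ (Subgroup.mem_zpowers z) k
  set π := QuotientGroup.mk' N with hπdef
  have hπz : π z = 1 := (QuotientGroup.eq_one_iff _).mpr (Subgroup.mem_zpowers z)
  have hπφ : ∀ g, π (φ g) = π g := by
    have hcomp : π.comp φ = π := by
      apply PresentedGroup.ext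
      intro x
      cases x
      · show π (φ b) = π b
        rw [hφb, map_mul, map_zpow, hπz, one_zpow, mul_one]
      · show π (φ a) = π a
        rw [hφa, map_mul, map_zpow, hπz, one_zpow, mul_one]
    intro g
    exact DFunLike.congr_fun hcomp g
  have hkerπ : ∀ g : G, π g = 1 → ∃ k : ℤ, g = z ^ k := by
    intro g hg
    obtain ⟨k, hk⟩ := Subgroup.mem_zpowers_iff.mp ((QuotientGroup.eq_one_iff _).mp hg)
    exact ⟨k, hk.symm⟩
  have hinj : Function.Injective φ := by
    rw [injective_iff_map_eq_one]
    intro g hg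
    have h1 : π g = 1 := by rw [← hπφ g, hg, map_one]
    obtain ⟨k, rfl⟩ := hkerπ g h1
    rw [hφzk] at hg
    have h2 := hzpow_inj _ hg
    have hk : k = 0 := by
      rcases mul_eq_zero.mp h2 with h | h
      · exact absurd h hr0
      · exact h
    rw [hk, zpow_zero]
  have hdecomp : ∀ g : G, ∃ k : ℤ, g = φ g * z ^ k := by
    intro g
    have h1 : π ((φ g)⁻¹ * g) = 1 := by rw [map_mul, map_inv, hπφ, inv_mul_cancel]
    obtain ⟨k, hk⟩ := hkerπ _ h1
    exact ⟨k, by rw [← hk, mul_inv_cancel_left]⟩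
  have hrange : ∀ s : ℤ, r ∣ s → z ^ s ∈ φ.range := by
    rintro s ⟨t, rfl⟩
    exact ⟨z ^ t, by rw [hφzk]⟩
  have hfin : φ.range.FiniteIndex := by
    set R := r.natAbs with hRdef
    have hR : 0 < R := Int.natAbs_pos.mpr hr0
    have hsurj : Function.Surjective
        (fun i : Fin R => (QuotientGroup.mk (z ^ ((i : ℕ) : ℤ)) : G ⧸ φ.range)) := by
      intro x
      induction x using QuotientGroup.induction_on with
      | H g =>
        obtain ⟨k, hk⟩ := hdecomp g
        have hmod1 : 0 ≤ k % (R : ℤ) := Int.emod_nonneg k (by exact_mod_cast hR.ne')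
        have hmod2 : k % (R : ℤ) < R := Int.emod_lt_of_pos k (by exact_mod_cast hR)
        refine ⟨⟨(k % (R : ℤ)).toNat, by omega⟩, ?_⟩
        have hv : (((k % (R : ℤ)).toNat : ℕ) : ℤ) = k % (R : ℤ) := Int.toNat_of_nonneg hmod1
        show (QuotientGroup.mk (z ^ (((k % (R : ℤ)).toNat : ℕ) : ℤ)) : G ⧸ φ.range)
          = QuotientGroup.mk g
        rw [QuotientGroup.eq]
        have hgz : (z ^ (((k % (R : ℤ)).toNat : ℕ) : ℤ))⁻¹ * g = φ g * z ^ (k - k % (R : ℤ)) := by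
          rw [hv, ← zpow_neg]
          conv_lhs => rw [hk]
          have hc : z ^ (-(k % (R : ℤ))) * (φ g) = φ g * z ^ (-(k % (R : ℤ))) :=
            ((hz (φ g)).zpow_left _).eq
          rw [← mul_assoc, hc, mul_assoc, ← zpow_add]
          congr 1
          ring
        rw [hgz]
        refine Subgroup.mul_mem _ ⟨g, rfl⟩ (hrange _ ?_)
        have h1 : (R : ℤ) ∣ k - k % (R : ℤ) := Int.dvd_self_sub_of_emod_eq rfl
        have h2 : r ∣ (R : ℤ) := Int.dvd_natAbs.mpr dvd_rfl
        exact h2.trans h1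
    haveI : Finite (G ⧸ φ.range) := Finite.of_surjective _ hsurj
    exact Subgroup.finiteIndex_of_finite_quotient
  have hsurj_iff : Function.Surjective φ ↔ r = 1 ∨ r = -1 := by
    constructor
    · intro hs
      obtain ⟨g, hg⟩ := hs z
      have h1 : π g = 1 := by rw [← hπφ, hg, hπz]
      obtain ⟨k, rfl⟩ := hkerπ g h1
      rw [hφzk] at hg
      have h2 : z ^ (r * k - 1) = 1 := by
        rw [zpow_sub, hg, zpow_one, mul_inv_cancel]
      have h3 := hzpow_inj _ h2
      exact Int.isUnit_iff.mp (IsUnit.of_mul_eq_one (a := r) k (by omega))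
    · intro hr1
      have hrr : r * r = 1 := by rcases hr1 with h | h <;> simp [h]
      have hzr : z ∈ φ.range := by
        have := hrange (r * r) ⟨r, rfl⟩
        rwa [hrr, zpow_one] at this
      have hzk : ∀ k : ℤ, z ^ k ∈ φ.range := fun k => Subgroup.zpow_mem _ hzr k
      have hA : a ∈ φ.range := by
        have hcalc : a * z ^ p * z ^ (-p) = a := by
          rw [mul_assoc, ← zpow_add, add_neg_cancel, zpow_zero, mul_one]
        rw [← hcalc]
        exact Subgroup.mul_mem _ ⟨a, hφa⟩ (hzk (-p))
      have hB : b ∈ φ.range := by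
        have hcalc : b * z ^ q * z ^ (-q) = b := by
          rw [mul_assoc, ← zpow_add, add_neg_cancel, zpow_zero, mul_one]
        rw [← hcalc]
        exact Subgroup.mul_mem _ ⟨b, hφb⟩ (hzk (-q))
      intro g
      have : g ∈ φ.range := by
        apply PresentedGroup.generated_by
        intro j
        cases j
        · exact hB
        · exact hA
      exact this
  exact ⟨φ, hφa, hφb, hinj, hfin, hsurj_iff⟩
end

section
/- For m, n ≥ 2 coprime, the torus knot group Γ_{m,n} = ⟨a, b ∣ aⁿ = bᵐ⟩ is not cofinitely Hopfian. -/
open Pointwise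


section Aux

variable (m n : ℕ)

/-- The generator `a`. -/
noncomputable def tkA : TorusKnotGroup m n := PresentedGroup.of true
/-- The generator `b`. -/
noncomputable def tkB : TorusKnotGroup m n := PresentedGroup.of false

lemma tk_rel : (tkA m n) ^ n = (tkB m n) ^ m := by
  have h : PresentedGroup.mk (torusKnotRels m n)
      (FreeGroup.of true ^ n * (FreeGroup.of false ^ m)⁻¹) = 1 :=
    (QuotientGroup.eq_one_iff _).mpr (Subgroup.subset_normalClosure rfl)
  rw [map_mul, map_inv, map_pow, map_pow, mul_inv_eq_one] at h
  exact h

lemma tk_central (g : TorusKnotGroup m n) : Commute ((tkA m n) ^ n) g := by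
  have : g ∈ Subgroup.centralizer {(tkA m n) ^ n} := by
    apply PresentedGroup.generated_by
    intro j
    rw [Subgroup.mem_centralizer_iff]
    rintro x rfl
    cases j with
    | true => exact ((Commute.refl (tkA m n)).pow_left n).eq
    | false =>
      have h : Commute ((tkB m n) ^ m) (tkB m n) := (Commute.refl _).pow_left m
      rw [tk_rel]
      exact h.eq
  exact Subgroup.mem_centralizer_iff.mp this _ rfl

end Aux

/-- For `m, n ≥ 2` coprime, the torus knot group `Γ_{m,n} = ⟨a, b ∣ aⁿ = bᵐ⟩`
is not cofinitely Hopfian. -/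
theorem torusKnotGroup_not_cofinitelyHopfian (m n : ℕ) (hm : 2 ≤ m) (hn : 2 ≤ n)
    (hco : Nat.Coprime m n) :
    ¬ CofinitelyHopfian (TorusKnotGroup m n) := by
  intro hch
  set r : ℕ := m * n + 1 with hr
  set a : TorusKnotGroup m n := tkA m n with ha
  set b : TorusKnotGroup m n := tkB m n with hb
  have hrel : a ^ n = b ^ m := tk_rel m n
  -- the endomorphism a ↦ a^r, b ↦ b^r
  have hf : ∀ w ∈ torusKnotRels m n,
      FreeGroup.lift (fun x => match x with
        | true => a ^ r | false => b ^ r) w = 1 := by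
    rintro w rfl
    rw [map_mul, map_inv, map_pow, map_pow, FreeGroup.lift_apply_of, FreeGroup.lift_apply_of,
      mul_inv_eq_one, ← pow_mul, ← pow_mul, mul_comm r n, mul_comm r m,
      pow_mul, pow_mul, hrel]
  set φ : TorusKnotGroup m n →* TorusKnotGroup m n := PresentedGroup.toGroup hf with hφ
  have hφa : φ a = a ^ r := PresentedGroup.toGroup.of hf
  have hφb : φ b = b ^ r := PresentedGroup.toGroup.of hf
  set z : TorusKnotGroup m n := a ^ n with hz
  have hzc : ∀ g, Commute z g := tk_central m n
  set H : Subgroup (TorusKnotGroup m n) := φ.range with hH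
  have haH : a ^ r ∈ H := ⟨a, hφa⟩
  have hbH : b ^ r ∈ H := ⟨b, hφb⟩
  have hzH : z ^ r ∈ H := by
    have h : z ^ r = (a ^ r) ^ n := by rw [hz, ← pow_mul, ← pow_mul, mul_comm]
    rw [h]; exact pow_mem haH n
  have hNzn : (Subgroup.zpowers z).Normal := by
    constructor
    rintro x ⟨k, rfl⟩ g
    refine ⟨k, ?_⟩
    have h : Commute (z ^ k) g := (hzc g).zpow_left k
    rw [← h.eq, mul_assoc, mul_inv_cancel, mul_one]
  have hsup : H ⊔ Subgroup.zpowers z = ⊤ := by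
    rw [Subgroup.eq_top_iff']
    intro x
    apply PresentedGroup.generated_by
    intro j
    cases j with
    | true =>
      show a ∈ H ⊔ Subgroup.zpowers z
      have key : a = (z ^ m)⁻¹ * a ^ r := by
        rw [eq_inv_mul_iff_mul_eq, hz, ← pow_mul, ← pow_succ, hr, mul_comm n m]
      rw [key]
      exact mul_mem
        (inv_mem (Subgroup.mem_sup_right (Subgroup.pow_mem _ (Subgroup.mem_zpowers z) m)))
        (Subgroup.mem_sup_left haH)
    | false =>
      show b ∈ H ⊔ Subgroup.zpowers z
      have key : b = (z ^ n)⁻¹ * b ^ r := by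
        rw [eq_inv_mul_iff_mul_eq, hrel, ← pow_mul, ← pow_succ, hr]
      rw [key]
      exact mul_mem
        (inv_mem (Subgroup.mem_sup_right (Subgroup.pow_mem _ (Subgroup.mem_zpowers z) n)))
        (Subgroup.mem_sup_left hbH)
  -- the quotient by H is finite
  have hfin : Finite (TorusKnotGroup m n ⧸ H) := by
    refine Finite.of_surjective (fun i : Fin r => QuotientGroup.mk (z ^ (i : ℕ))) ?_
    intro q
    induction q using QuotientGroup.induction_on with
    | H g =>
      have hg : g ∈ ((H : Set (TorusKnotGroup m n)) *
          ((Subgroup.zpowers z : Subgroup (TorusKnotGroup m n)) : Set (TorusKnotGroup m n))) := by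
        rw [← Subgroup.mul_normal, hsup]; trivial
      obtain ⟨h, hh, w, hw, rfl⟩ := hg
      obtain ⟨k, rfl⟩ := hw
      set i : ℤ := k % (r : ℤ) with hi
      have hrpos : (0:ℤ) < (r:ℤ) := by positivity
      have hi0 : 0 ≤ i := Int.emod_nonneg k (by positivity)
      have hilt : i < (r : ℤ) := Int.emod_lt_of_pos k hrpos
      refine ⟨⟨i.toNat, by omega⟩, ?_⟩
      rw [QuotientGroup.eq]
      have hnat : (z : TorusKnotGroup m n) ^ ((⟨i.toNat, by omega⟩ : Fin r) : ℕ) = z ^ i := by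
        simp only [← zpow_natCast]
        congr 1
        omega
      have hzik : (z ^ ((⟨i.toNat, by omega⟩ : Fin r) : ℕ))⁻¹ * (h * z ^ k)
          = ((z ^ i)⁻¹ * z ^ k) * h := by
        rw [hnat, ← ((hzc h).zpow_left k).eq, ← mul_assoc]
      rw [hzik]
      have hdvd : (z ^ i)⁻¹ * z ^ k = (z ^ r) ^ (k / (r:ℤ)) := by
        rw [← zpow_natCast z r, ← zpow_mul, ← zpow_neg, ← zpow_add]
        congr 1
        have := Int.mul_ediv_add_emod k (r : ℤ)
        omega
      exact mul_mem (by rw [hdvd]; exact Subgroup.zpow_mem _ hzH _) hh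
  have hFI : H.FiniteIndex := @Subgroup.finiteIndex_of_finite_quotient _ _ _ hfin
  have hbij : Function.Bijective φ := hch φ hFI
  -- the abelianization-style homomorphism ψ : Γ → ℤ, a ↦ m, b ↦ n
  have hgm : ∀ w ∈ torusKnotRels m n,
      FreeGroup.lift (fun x => match x with
        | true => Multiplicative.ofAdd (m : ℤ)
        | false => Multiplicative.ofAdd (n : ℤ)) w = 1 := by
    rintro w rfl
    rw [map_mul, map_inv, map_pow, map_pow, FreeGroup.lift_apply_of, FreeGroup.lift_apply_of,
      mul_inv_eq_one, ← ofAdd_nsmul, ← ofAdd_nsmul]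
    simp [smul_eq_mul, mul_comm]
  set ψ : TorusKnotGroup m n →* Multiplicative ℤ := PresentedGroup.toGroup hgm with hψ
  have hψa : ψ a = Multiplicative.ofAdd (m : ℤ) := PresentedGroup.toGroup.of hgm
  have hψb : ψ b = Multiplicative.ofAdd (n : ℤ) := PresentedGroup.toGroup.of hgm
  have hψφ : ψ.comp φ = (powMonoidHom r).comp ψ := by
    apply PresentedGroup.ext
    intro x
    cases x with
    | true =>
      rw [MonoidHom.comp_apply, MonoidHom.comp_apply, powMonoidHom_apply]
      show ψ (φ a) = ψ a ^ r
      rw [hφa, map_pow]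
    | false =>
      rw [MonoidHom.comp_apply, MonoidHom.comp_apply, powMonoidHom_apply]
      show ψ (φ b) = ψ b ^ r
      rw [hφb, map_pow]
  obtain ⟨u, v, huv⟩ : IsCoprime (m : ℤ) (n : ℤ) := Int.isCoprime_iff_gcd_eq_one.mpr hco
  obtain ⟨y, hy⟩ := hbij.2 (a ^ u * b ^ v)
  have hval : ψ (a ^ u * b ^ v) = Multiplicative.ofAdd (1 : ℤ) := by
    rw [map_mul, map_zpow, map_zpow, hψa, hψb, ← ofAdd_zsmul, ← ofAdd_zsmul, ← ofAdd_add]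
    have e : u • (m:ℤ) + v • (n:ℤ) = 1 := by rw [smul_eq_mul, smul_eq_mul]; linarith [huv]
    rw [e]
  have hcontra : ψ (a ^ u * b ^ v) = (ψ y) ^ r := by
    rw [← hy, ← MonoidHom.comp_apply, hψφ, MonoidHom.comp_apply, powMonoidHom_apply]
  rw [hval] at hcontra
  have htz : (1 : ℤ) = r * Multiplicative.toAdd (ψ y) := by
    have := congrArg Multiplicative.toAdd hcontra
    simpa [toAdd_pow] using this
  have hdvd1 : (r : ℤ) ∣ 1 := ⟨Multiplicative.toAdd (ψ y), htz⟩
  have hle := Int.le_of_dvd one_pos hdvd1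
  have hge : 4 ≤ m * n := Nat.mul_le_mul hm hn
  have : (r : ℤ) = (m : ℤ) * n + 1 := by push_cast [hr]; ring
  omega
end

section
/- Let Γ = N ⋊_θ ℤ where N is cofinitely Hopfian, and let φ : Γ → Γ be an endomorphism with image of finite index such that φ(N) ≤ N. Then φ is injective, φ(Γ) is normal in Γ, and Γ/φ(Γ) is finite cyclic. -/
/-- Let `Γ = N ⋊_θ ℤ` with `N` cofinitely Hopfian, and let `φ : Γ → Γ` be an
endomorphism with image of finite index such that `φ(N) ≤ N`.  Then `φ` is
injective, `φ(Γ)` is a normal subgroup of `Γ`, and the quotient `Γ/φ(Γ)` is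
finite cyclic. -/
theorem semidirect_endomorphism_of_cofinitelyHopfian_kernel
    (N : Type*) [Group N] (hN : CofinitelyHopfian N) (θ : MulAut N)
    (φ : Monoid.End (SemidirectProduct N (Multiplicative ℤ) (zpowersHom (MulAut N) θ)))
    (hfi : (φ : SemidirectProduct N (Multiplicative ℤ) (zpowersHom (MulAut N) θ) →*
        SemidirectProduct N (Multiplicative ℤ) (zpowersHom (MulAut N) θ)).range.FiniteIndex)
    (hφN : Subgroup.map (φ : SemidirectProduct N (Multiplicative ℤ) (zpowersHom (MulAut N) θ) →*
        SemidirectProduct N (Multiplicative ℤ) (zpowersHom (MulAut N) θ))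
        SemidirectProduct.inl.range ≤ SemidirectProduct.inl.range) :
    Function.Injective φ ∧
    (φ : SemidirectProduct N (Multiplicative ℤ) (zpowersHom (MulAut N) θ) →*
        SemidirectProduct N (Multiplicative ℤ) (zpowersHom (MulAut N) θ)).range.Normal ∧
    Finite (SemidirectProduct N (Multiplicative ℤ) (zpowersHom (MulAut N) θ) ⧸
      (φ : SemidirectProduct N (Multiplicative ℤ) (zpowersHom (MulAut N) θ) →*
        SemidirectProduct N (Multiplicative ℤ) (zpowersHom (MulAut N) θ)).range) ∧
    -- the quotient `Γ/φ(Γ)` is cyclic: some `g` generates it modulo `φ(Γ)`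
    (∃ g, ∀ x, ∃ k : ℤ,
      g ^ k * x ∈ (φ : SemidirectProduct N (Multiplicative ℤ) (zpowersHom (MulAut N) θ) →*
        SemidirectProduct N (Multiplicative ℤ) (zpowersHom (MulAut N) θ)).range) := by
  classical
  set Γ' := SemidirectProduct N (Multiplicative ℤ) (zpowersHom (MulAut N) θ) with hΓ'
  let φ' : Γ' →* Γ' := φ
  let ι : N →* Γ' := SemidirectProduct.inl
  let π : Γ' →* Multiplicative ℤ := SemidirectProduct.rightHom
  have hιπ : ι.range = π.ker := SemidirectProduct.range_inl_eq_ker_rightHom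
  -- φ restricted to N
  have hinl : ∀ n : N, ∃ m : N, ι m = φ' (ι n) := by
    intro n
    exact hφN ⟨ι n, ⟨n, rfl⟩, rfl⟩
  choose ρf hρf using hinl
  have ιinj : Function.Injective ι := SemidirectProduct.inl_injective
  let ρ : N →* N :=
    { toFun := ρf
      map_one' := by
        apply ιinj
        simp [hρf]
      map_mul' := by
        intro a b
        apply ιinj
        rw [hρf, map_mul, map_mul, map_mul, ← hρf, ← hρf] }
  have hρ' : ∀ n : N, ι (ρ n) = φ' (ι n) := hρf
  -- the induced endomorphism of ℤ
  let ψ : Multiplicative ℤ →* Multiplicative ℤ := π.comp (φ'.comp SemidirectProduct.inr)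
  have hcomm : ∀ x : Γ', π (φ' x) = ψ (π x) := by
    intro x
    conv_lhs => rw [← SemidirectProduct.inl_left_mul_inr_right x]
    rw [map_mul, map_mul]
    have h1 : π (φ' (ι x.left)) = 1 := by
      rw [← hρ']
      exact SemidirectProduct.rightHom_inl _
    rw [h1, one_mul]
    rfl
  -- ψ.range has finite index
  have hle : φ'.range ≤ ψ.range.comap π := by
    rintro _ ⟨x, rfl⟩
    exact ⟨π x, (hcomm x).symm⟩
  have hcfi : (ψ.range.comap π).FiniteIndex := Subgroup.finiteIndex_of_le hle
  have hψfi : ψ.range.FiniteIndex := by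
    constructor
    have := Subgroup.index_comap ψ.range π
    rw [MonoidHom.range_eq_top.mpr SemidirectProduct.rightHom_surjective,
      Subgroup.relIndex_top_right] at this
    rw [← this]
    exact hcfi.index_ne_zero
  -- ψ is injective (ψ m = ψ(ofAdd 1) ^ toAdd m, and the multiplier is nonzero)
  have hψpow : ∀ m : Multiplicative ℤ, ψ m = ψ (Multiplicative.ofAdd 1) ^ m.toAdd := by
    intro m
    rw [← map_zpow]
    congr 1
    rw [← ofAdd_zsmul, smul_eq_mul, mul_one]
    rfl
  have hd : ψ (Multiplicative.ofAdd 1) ≠ 1 := by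
    intro h
    have hbot : ψ.range = ⊥ := by
      rw [eq_bot_iff]
      rintro _ ⟨m, rfl⟩
      simp only [Subgroup.mem_bot]
      rw [hψpow m, h, one_zpow]
    rw [hbot] at hψfi
    have := hψfi.index_ne_zero
    rw [Subgroup.index_bot] at this
    simp [Nat.card_eq_zero_of_infinite] at this
  have hψinj : ∀ m : Multiplicative ℤ, ψ m = 1 → m = 1 := by
    intro m hm
    rw [hψpow m] at hm
    have h := congrArg Multiplicative.toAdd hm
    simp only [toAdd_zpow, toAdd_one, smul_eq_mul] at h
    have hd' : Multiplicative.toAdd (ψ (Multiplicative.ofAdd 1)) ≠ 0 := by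
      intro h0
      apply hd
      apply Multiplicative.toAdd.injective
      simpa using h0
    have hm0 : Multiplicative.toAdd m = 0 := by
      rcases mul_eq_zero.mp h with h' | h'
      · exact h'
      · exact absurd h' hd'
    apply Multiplicative.toAdd.injective
    simpa using hm0
  -- ρ has finite index image, hence is bijective
  have hρrange : ρ.range = φ'.range.comap ι := by
    ext n
    constructor
    · rintro ⟨m, rfl⟩
      exact ⟨ι m, (hρ' m).symm⟩
    · rintro ⟨x, hx⟩
      have h1 : ψ (π x) = 1 := by
        rw [← hcomm, hx]
        exact SemidirectProduct.rightHom_inl _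
      have h2 : x ∈ ι.range := by
        rw [hιπ]
        exact hψinj _ h1
      obtain ⟨m, rfl⟩ := h2
      exact ⟨m, ιinj (by rw [hρ' m, hx])⟩
  have hρfi : ρ.range.FiniteIndex := by
    constructor
    rw [hρrange, Subgroup.index_comap]
    intro h
    exact hfi.index_ne_zero (Subgroup.index_eq_zero_of_relIndex_eq_zero h)
  have hρbij : Function.Bijective ρ := hN ρ hρfi
  -- injectivity of φ
  have hφinj : Function.Injective φ' := by
    rw [injective_iff_map_eq_one]
    intro x hx
    have h1 : ψ (π x) = 1 := by rw [← hcomm, hx, map_one]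
    have h2 : x ∈ ι.range := by rw [hιπ]; exact hψinj _ h1
    obtain ⟨m, rfl⟩ := h2
    have h3 : ρ m = 1 := ιinj (by rw [hρ' m, hx, map_one])
    have h4 : m = 1 := hρbij.1 (by rw [h3, map_one])
    rw [h4, map_one]
  -- the range of φ is the preimage of ψ.range
  have hrange : φ'.range = ψ.range.comap π := by
    apply le_antisymm hle
    rintro x hx
    obtain ⟨m, hm⟩ := hx
    have hker : x * (φ' (SemidirectProduct.inr m))⁻¹ ∈ ι.range := by
      rw [hιπ]
      have : π (φ' (SemidirectProduct.inr m)) = ψ m := rfl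
      simp only [MonoidHom.mem_ker, map_mul, map_inv, this, hm]
      rw [show π (φ' (SemidirectProduct.inr m))⁻¹ = (π (φ' (SemidirectProduct.inr m)))⁻¹ from map_inv π _, this, hm]
      exact mul_inv_cancel _
    obtain ⟨n, hn⟩ := hker
    obtain ⟨n', hn'⟩ := hρbij.2 n
    refine ⟨SemidirectProduct.inl n' * SemidirectProduct.inr m, ?_⟩
    rw [map_mul]
    have : φ' (SemidirectProduct.inl n') = ι n := by rw [← hρ' n', hn']
    rw [this, hn]
    exact inv_mul_cancel_right x _
  have hnormal : φ'.range.Normal := by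
    rw [hrange]
    exact Subgroup.Normal.comap inferInstance π
  refine ⟨hφinj, hnormal, ?_, ?_⟩
  · exact @Subgroup.finite_quotient_of_finiteIndex _ _ _ hfi
  · refine ⟨SemidirectProduct.inr (Multiplicative.ofAdd 1), fun x => ⟨-(π x).toAdd, ?_⟩⟩
    have : φ'.range = ψ.range.comap π := hrange
    show SemidirectProduct.inr (Multiplicative.ofAdd 1) ^ (-(π x).toAdd) * x ∈ φ'.range
    rw [this, Subgroup.mem_comap]
    have hπ : π (SemidirectProduct.inr (Multiplicative.ofAdd 1) ^ (-(π x).toAdd) * x) = 1 := by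
      rw [map_mul, map_zpow, SemidirectProduct.rightHom_inr]
      have : (Multiplicative.ofAdd (1 : ℤ)) ^ (-(π x).toAdd) = (π x)⁻¹ := by
        apply Multiplicative.toAdd.injective
        simp
      rw [this, inv_mul_cancel]
    rw [hπ]
    exact Subgroup.one_mem _
end
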